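/- Let H : ℝ≥0 → ℝ≥0 be a function satisfying H(x) + H(1/x) = 1 for all x > 0. Then its Mellin transform H̃(s) = ∫₀^∞ H(y) y^{s-1} dy (wherever defined by analytic continuation) satisfies H̃(-s) = -H̃(s) away from s = 0; i.e., H̃ is an odd function of s. -/

import Mathlib

open MeasureTheory Set Complex Filter Asymptotics Topology

theorem mellin_transform_odd (H : ℝ → ℝ) (G : ℂ → ℂ)
    (hHc : Continuous H)
    (hH1 : ∀ x ∈ Set.Icc (0 : ℝ) (1/2), H x = 1)
    (hfe : ∀ x : ℝ, 0 < x → H x + H (1 / x) = 1)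
    (hG : DifferentiableOn ℂ G {s : ℂ | s ≠ 0})
    (hagree : ∀ s : ℂ, 0 < s.re →
      G s = ∫ y in Set.Ioi (0 : ℝ), (H y : ℂ) * (y : ℂ) ^ (s - 1)) :
    ∀ s : ℂ, s ≠ 0 → G (-s) = -G s := by
  set ind : ℝ → ℂ := Set.indicator (Set.Ioc 0 1) (fun _ => 1) with hind_def
  set K : ℝ → ℂ := fun y => (H y : ℂ) - ind y with hK_def
  -- H vanishes for y ≥ 2
  have hH2 : ∀ y : ℝ, 2 ≤ y → H y = 0 := by
    intro y hy
    have hy0 : (0:ℝ) < y := by linarith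
    have h1y : 1 / y ∈ Set.Icc (0:ℝ) (1/2) := by
      constructor
      · positivity
      · rw [div_le_div_iff₀ hy0 (by norm_num)]; linarith
    have := hfe y hy0
    rw [hH1 _ h1y] at this
    linarith
  -- K vanishes near 0 and at infinity
  have hK0 : ∀ y ∈ Set.Ioc (0:ℝ) (1/2), K y = 0 := by
    intro y hy
    have h1 : H y = 1 := hH1 y ⟨hy.1.le, hy.2⟩
    have h2 : ind y = 1 := by
      have hmem : y ∈ Set.Ioc (0:ℝ) 1 := ⟨hy.1, by linarith [hy.2]⟩
      rw [hind_def, Set.indicator_of_mem hmem]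
    simp [hK_def, h1, h2]
  have hKtop : ∀ y : ℝ, 2 ≤ y → K y = 0 := by
    intro y hy
    have h2 : ind y = 0 := by
      rw [hind_def, Set.indicator_of_notMem]
      intro h; linarith [h.2]
    simp [hK_def, hH2 y hy, h2]
  -- Integrability of K on (0, ∞)
  have hHC : Continuous fun y : ℝ => (H y : ℂ) := Complex.continuous_ofReal.comp hHc
  have hHint : IntegrableOn (fun y : ℝ => (H y : ℂ)) (Set.Ioi 0) := by
    have h1 : IntegrableOn (fun y : ℝ => (H y : ℂ)) (Set.Ioc 0 2) :=
      hHC.integrableOn_Ioc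
    have h2 : IntegrableOn (fun y : ℝ => (H y : ℂ)) (Set.Ioi 2) := by
      refine (integrableOn_zero (ε' := ℂ)).congr_fun ?_ measurableSet_Ioi
      intro y hy
      simp [hH2 y (le_of_lt hy)]
    have := h1.union h2
    rwa [Set.Ioc_union_Ioi_eq_Ioi (by norm_num : (0:ℝ) ≤ 2)] at this
  have hindint : IntegrableOn ind (Set.Ioi 0) := by
    refine Integrable.integrableOn ?_
    rw [hind_def, integrable_indicator_iff measurableSet_Ioc]
    exact integrableOn_const measure_Ioc_lt_top.ne
  have hKint : IntegrableOn K (Set.Ioi 0) := hHint.sub hindint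
  have hKloc : LocallyIntegrableOn K (Set.Ioi 0) := hKint.locallyIntegrableOn
  -- big-O estimates
  have hKbigO_top : ∀ a : ℝ, K =O[atTop] (· ^ (-a)) := by
    intro a
    have h0 : K =ᶠ[atTop] (fun _ => (0:ℂ)) :=
      Filter.eventually_atTop.mpr ⟨2, hKtop⟩
    exact (Asymptotics.isBigO_zero (fun x : ℝ => x ^ (-a)) atTop).congr' h0.symm
      Filter.EventuallyEq.rfl
  have hKbigO_bot : ∀ b : ℝ, K =O[𝓝[>] (0:ℝ)] (· ^ (-b)) := by
    intro b
    have hmem : Set.Ioc (0:ℝ) (1/2) ∈ 𝓝[>] (0:ℝ) :=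
      Ioc_mem_nhdsGT_of_mem ⟨le_refl 0, by norm_num⟩
    have h0 : K =ᶠ[𝓝[>] (0:ℝ)] (fun _ => (0:ℂ)) :=
      Filter.eventually_of_mem hmem hK0
    exact (Asymptotics.isBigO_zero (fun x : ℝ => x ^ (-b)) _).congr' h0.symm
      Filter.EventuallyEq.rfl
  -- mellin K is differentiable everywhere
  have hKdiff : ∀ s : ℂ, DifferentiableAt ℂ (mellin K) s := by
    intro s
    exact mellin_differentiableAt_of_isBigO_rpow hKloc (hKbigO_top (s.re + 1))
      (lt_add_one _) (hKbigO_bot (s.re - 1)) (by linarith)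
  have hKconv : ∀ s : ℂ, MellinConvergent K s := by
    intro s
    exact mellinConvergent_of_isBigO_rpow hKloc (hKbigO_top (s.re + 1))
      (lt_add_one _) (hKbigO_bot (s.re - 1)) (by linarith)
  -- mellin K is odd
  have hodd : ∀ s : ℂ, mellin K (-s) = -mellin K s := by
    intro s
    rw [← mellin_comp_inv K s]
    have hae : ∀ᵐ t : ℝ, t ∈ Set.Ioi (0:ℝ) →
        (t : ℂ) ^ (s - 1) • K t⁻¹ = (t : ℂ) ^ (s - 1) • (-(K t)) := by
      have h1 : ∀ᵐ t : ℝ, t ≠ 1 := by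
        refine ae_iff.mpr ?_
        simpa using measure_singleton (1:ℝ)
      filter_upwards [h1] with t ht1 ht
      have ht0 : (0:ℝ) < t := ht
      have hKinv : K t⁻¹ = -(K t) := by
        have hfe' : H t⁻¹ = 1 - H t := by
          have := hfe t ht0
          rw [one_div] at this
          linarith
        rcases lt_or_gt_of_ne ht1 with hlt | hgt
        · have hmem : t ∈ Set.Ioc (0:ℝ) 1 := ⟨ht0, hlt.le⟩
          have hi1 : ind t = 1 := Set.indicator_of_mem hmem _
          have hi2 : ind t⁻¹ = 0 := by
            refine Set.indicator_of_notMem ?_ _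
            intro h
            have : (1:ℝ) < t⁻¹ := (one_lt_inv₀ ht0).mpr hlt
            linarith [h.2]
          simp only [hK_def, hfe', hi1, hi2]
          push_cast
          ring
        · have hi1 : ind t = 0 := by
            refine Set.indicator_of_notMem ?_ _
            intro h
            linarith [h.2]
          have hi2 : ind t⁻¹ = 1 := by
            have hmem : t⁻¹ ∈ Set.Ioc (0:ℝ) 1 := ⟨by positivity, by
              rw [inv_le_one_iff₀]; right; linarith⟩
            exact Set.indicator_of_mem hmem _
          simp only [hK_def, hfe', hi1, hi2]
          push_cast
          ring
      rw [hKinv]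
    calc mellin (fun t => K t⁻¹) s
        = ∫ t in Set.Ioi (0:ℝ), (t : ℂ) ^ (s - 1) • (-(K t)) := by
          rw [mellin]
          exact setIntegral_congr_ae measurableSet_Ioi hae
      _ = -mellin K s := by
          simp only [smul_neg, mellin]
          exact integral_neg _
  -- For re s > 0 : G s = 1/s + mellin K s
  have hGopen : ∀ s : ℂ, 0 < s.re → G s = 1/s + mellin K s := by
    intro s hs
    have hmel1 := hasMellin_one_Ioc hs
    have hadd := hasMellin_add (hKconv s) hmel1.1
    have hfun : (fun t => K t + ind t) = fun y : ℝ => (H y : ℂ) := by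
      funext y
      simp [hK_def]
    rw [hfun, hmel1.2] at hadd
    have hGs : G s = mellin (fun y : ℝ => (H y : ℂ)) s := by
      rw [hagree s hs, mellin]
      refine setIntegral_congr_fun measurableSet_Ioi fun y _ => ?_
      rw [smul_eq_mul, mul_comm]
    rw [hGs, hadd.2, add_comm]
  -- identity theorem to extend to all s ≠ 0
  have hU : IsPreconnected {s : ℂ | s ≠ 0} := by
    have : ({0}ᶜ : Set ℂ) = {s : ℂ | s ≠ 0} := rfl
    rw [← this]
    exact (isConnected_compl_singleton_of_one_lt_rank
      (by rw [Complex.rank_real_complex]; norm_num) 0).isPreconnected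
  have hUopen : IsOpen {s : ℂ | s ≠ 0} := isOpen_compl_singleton
  set F : ℂ → ℂ := fun z => G z - (1/z + mellin K z) with hF_def
  have hFdiff : DifferentiableOn ℂ F {s : ℂ | s ≠ 0} := by
    refine hG.sub (DifferentiableOn.add ?_ ?_)
    · intro z hz
      exact ((differentiableAt_const (1:ℂ)).div differentiableAt_id hz).differentiableWithinAt
    · exact fun z _ => (hKdiff z).differentiableWithinAt
  have hFanal : AnalyticOnNhd ℂ F {s : ℂ | s ≠ 0} := hFdiff.analyticOnNhd hUopen
  have hzanal : AnalyticOnNhd ℂ (fun _ => (0:ℂ)) {s : ℂ | s ≠ 0} := analyticOnNhd_const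
  have h1U : (1:ℂ) ∈ {s : ℂ | s ≠ 0} := by simp
  have hev : F =ᶠ[nhds (1:ℂ)] (fun _ => (0:ℂ)) := by
    have hopen : IsOpen {s : ℂ | 0 < s.re} := isOpen_lt continuous_const Complex.continuous_re
    have h1mem : (1:ℂ) ∈ {s : ℂ | 0 < s.re} := by simp
    refine Filter.eventually_of_mem (hopen.mem_nhds h1mem) fun z hz => ?_
    simp only [hF_def]
    rw [hGopen z hz]
    ring
  have hEqOn : Set.EqOn F (fun _ => (0:ℂ)) {s : ℂ | s ≠ 0} :=
    hFanal.eqOn_of_preconnected_of_eventuallyEq hzanal hU h1U hev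
  -- conclude
  intro s hs
  have h1 : G s = 1/s + mellin K s := sub_eq_zero.mp (hEqOn hs)
  have h2 : G (-s) = 1/(-s) + mellin K (-s) := sub_eq_zero.mp (hEqOn (neg_ne_zero.mpr hs))
  rw [h1, h2, hodd s]
  rw [div_neg]
  ring
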